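/- arXiv:1612.07727 — 2 statements merged into one kernel-verified Lean document; each statement's English description precedes it below -/
import Mathlib

section
/- (Nash iteration lemma) Let c₁, c₂, β > 0 and p ≥ 2. Let w be positive, nondecreasing and continuous on [0,∞), and let u be positive and continuously differentiable on [0,∞) satisfying u'(t) ≤ −(c₁/p) t^{p−2} u(t)^{1+βp} / w(t)^{βp} + c₂ p u(t) for all t ≥ 0. Then there exists a constant K = K(c₁,β) > 0 such that for every δ ∈ (0,1] and all t ≥ 0, t^{(p−1)/(βp)} u(t) ≤ (K p²/δ)^{1/(βp)} e^{c₂ δ t / p} w(t). -/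
open Real

/-- Bernoulli-type bound: `(1 - ε) ^ (p - 2) ≥ 1/2` when `0 ≤ ε ≤ 1/p²`, `p ≥ 2`. -/
lemma nash_aux_half {ε p : ℝ} (hp : 2 ≤ p) (hε0 : 0 ≤ ε) (hε : ε * p ^ 2 ≤ 1) :
    (1 / 2 : ℝ) ≤ (1 - ε) ^ (p - 2) := by
  have hp0 : (0 : ℝ) < p := by linarith
  have hp2 : (4 : ℝ) ≤ p ^ 2 := by nlinarith
  have hε4 : ε ≤ 1 / 4 := by nlinarith
  have hb0 : (0 : ℝ) < 1 - ε := by linarith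
  have hb1 : (1 : ℝ) - ε ≤ 1 := by linarith
  rcases le_total p 3 with h3 | h3
  · have h1 : (1 - ε) ^ (1 : ℝ) ≤ (1 - ε) ^ (p - 2) := by
      apply Real.rpow_le_rpow_of_exponent_ge hb0 hb1
      linarith
    rw [Real.rpow_one] at h1
    linarith
  · have hber : 1 + (p - 2) * (-ε) ≤ (1 + (-ε)) ^ (p - 2) :=
      one_add_mul_self_le_rpow_one_add (by linarith) (by linarith)
    have hpe : (p - 2) * ε ≤ 1 / 2 := by
      have h1 : (p - 2) * ε ≤ p * ε := by nlinarith
      have h2 : p * ε ≤ 1 / p := by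
        rw [le_div_iff₀ hp0]; nlinarith
      have h3 : 1 / p ≤ 1 / 2 := by
        apply one_div_le_one_div_of_le <;> linarith
      linarith
    have : (1 + (-ε)) = 1 - ε := by ring
    rw [this] at hber
    linarith

set_option maxHeartbeats 1000000 in
/-- Nash iteration lemma (Stroock, Lemma I.1.14): the constant `K` depends
only on `c₁` and `β`. -/
theorem nash_iteration (c₁ β : ℝ) (hc₁ : 0 < c₁) (hβ : 0 < β) :
    ∃ K > (0 : ℝ), ∀ (c₂ p : ℝ) (u u' w : ℝ → ℝ),
      0 < c₂ → 2 ≤ p →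
      (∀ t, 0 ≤ t → 0 < u t) →
      (∀ t, 0 ≤ t → 0 < w t) →
      ContinuousOn w (Set.Ici 0) →
      MonotoneOn w (Set.Ici 0) →
      (∀ t, 0 ≤ t → HasDerivAt u (u' t) t) →
      ContinuousOn u' (Set.Ici 0) →
      (∀ t, 0 ≤ t →
        u' t ≤ -(c₁ / p) * t ^ (p - 2) * u t ^ (1 + β * p) / w t ^ (β * p)
                + c₂ * p * u t) →
      ∀ δ : ℝ, δ ∈ Set.Ioc (0 : ℝ) 1 → ∀ t, 0 ≤ t →
        t ^ ((p - 1) / (β * p)) * u t ≤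
          (K * p ^ 2 / δ) ^ (1 / (β * p)) * Real.exp (c₂ * δ * t / p) * w t := by
  refine ⟨2 / (β * c₁), by positivity, ?_⟩
  intro c₂ p u u' w hc₂ hp hu hw hwcont hwmono hu' hu'cont hineq δ hδ t₀ ht₀
  obtain ⟨hδ0, hδ1⟩ := hδ
  have hp0 : (0 : ℝ) < p := by linarith
  have hβp : (0 : ℝ) < β * p := by positivity
  have hwt₀ : 0 < w t₀ := hw t₀ ht₀
  rcases eq_or_lt_of_le ht₀ with h0 | ht₀pos
  · -- t₀ = 0 case
    have hne : ((p - 1) / (β * p)) ≠ 0 := ne_of_gt (div_pos (by linarith) hβp)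
    rw [← h0, Real.zero_rpow hne, zero_mul]
    have hw0 : 0 < w 0 := hw 0 le_rfl
    have h1 : (0:ℝ) < (2 / (β * c₁) * p ^ 2 / δ) ^ (1 / (β * p)) := by positivity
    have h2 : (0:ℝ) < Real.exp (c₂ * δ * 0 / p) := Real.exp_pos _
    positivity
  -- main case: t₀ > 0
  set ε : ℝ := δ / p ^ 2 with hε_def
  set a : ℝ := c₂ * β * p ^ 2 with ha_def
  set s₀ : ℝ := (1 - ε) * t₀ with hs₀_def
  have hp2pos : (0:ℝ) < p ^ 2 := by positivity
  have hεpos : 0 < ε := by positivity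
  have hε1 : ε * p ^ 2 ≤ 1 := by
    rw [hε_def]
    rw [div_mul_cancel₀ _ (ne_of_gt hp2pos)]
    exact hδ1
  have hεle : ε ≤ 1 / 4 := by
    have : (4:ℝ) ≤ p ^ 2 := by nlinarith
    rw [hε_def, div_le_iff₀ hp2pos]; nlinarith
  have hapos : 0 < a := by positivity
  have hs₀pos : 0 < s₀ := by
    apply mul_pos (by linarith) ht₀pos
  have hs₀lt : s₀ < t₀ := by
    rw [hs₀_def]; nlinarith
  have hp2 : (0:ℝ) ≤ p - 2 := by linarith
  -- derivative of g s = exp (a s) * (u s) ^ (-(β p))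
  set g : ℝ → ℝ := fun s => Real.exp (a * s) * u s ^ (-(β * p)) with hg_def
  set D : ℝ → ℝ := fun s => a * Real.exp (a * s) * u s ^ (-(β * p))
      + Real.exp (a * s) * (u' s * (-(β * p)) * u s ^ (-(β * p) - 1)) with hD_def
  have hg : ∀ s, 0 ≤ s → HasDerivAt g (D s) s := by
    intro s hs
    have h1 : HasDerivAt (fun x : ℝ => Real.exp (a * x)) (Real.exp (a * s) * (a * 1)) s :=
      ((hasDerivAt_id s).const_mul a).exp
    have h2 : HasDerivAt (fun x : ℝ => u x ^ (-(β * p)))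
        (u' s * (-(β * p)) * u s ^ (-(β * p) - 1)) s :=
      (hu' s hs).rpow_const (Or.inl (hu s hs).ne')
    have h3 := h1.mul h2
    have heq : D s = Real.exp (a * s) * (a * 1) * u s ^ (-(β * p))
        + Real.exp (a * s) * (u' s * (-(β * p)) * u s ^ (-(β * p) - 1)) := by
      simp only [hD_def]; ring
    rw [hg_def, heq]
    exact h3
  -- lower bound for D on [s₀, t₀]
  set m : ℝ := Real.exp (a * s₀) * (β * c₁ * s₀ ^ (p - 2) / w t₀ ^ (β * p)) with hm_def
  have hwbt₀ : 0 < w t₀ ^ (β * p) := Real.rpow_pos_of_pos hwt₀ _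
  have hmpos : 0 < m := by
    have := Real.rpow_pos_of_pos hs₀pos (p - 2)
    positivity
  have hkey : ∀ s ∈ Set.Icc s₀ t₀, m ≤ D s := by
    intro s hs
    have hs0 : 0 ≤ s := le_trans hs₀pos.le hs.1
    have hUpos : 0 < u s := hu s hs0
    have hWpos : 0 < w s := hw s hs0
    have hWb : 0 < w s ^ (β * p) := Real.rpow_pos_of_pos hWpos _
    set R : ℝ := -(c₁ / p) * s ^ (p - 2) * u s ^ (1 + β * p) / w s ^ (β * p) + c₂ * p * u s
      with hR_def
    have hub : u' s ≤ R := hineq s hs0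
    have hk : (-(β * p)) * u s ^ (-(β * p) - 1) ≤ 0 := by
      have := Real.rpow_pos_of_pos hUpos (-(β * p) - 1)
      nlinarith
    have hmul : R * ((-(β * p)) * u s ^ (-(β * p) - 1))
        ≤ u' s * ((-(β * p)) * u s ^ (-(β * p) - 1)) :=
      mul_le_mul_of_nonpos_right hub hk
    -- algebraic identity
    have hAB : u s ^ (1 + β * p) * u s ^ (-(β * p) - 1) = 1 := by
      rw [← Real.rpow_add hUpos]
      have : 1 + β * p + (-(β * p) - 1) = 0 := by ring
      rw [this, Real.rpow_zero]
    have hUB : u s * u s ^ (-(β * p) - 1) = u s ^ (-(β * p)) := by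
      nth_rw 1 [← Real.rpow_one (u s)]
      rw [← Real.rpow_add hUpos]
      congr 1
      ring
    have he : R * ((-(β * p)) * u s ^ (-(β * p) - 1))
        = β * c₁ * s ^ (p - 2) / w s ^ (β * p) - a * u s ^ (-(β * p)) := by
      have e1 : R * ((-(β * p)) * u s ^ (-(β * p) - 1))
          = (c₁ / p) * (β * p) * s ^ (p - 2)
              * (u s ^ (1 + β * p) * u s ^ (-(β * p) - 1)) / w s ^ (β * p)
            - (c₂ * p * (β * p)) * (u s * u s ^ (-(β * p) - 1)) := by
        rw [hR_def]; field_simp; ring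
      rw [e1, hAB, hUB]
      have e2 : c₁ / p * (β * p) = β * c₁ := by field_simp
      have e3 : c₂ * p * (β * p) = a := by rw [ha_def]; ring
      rw [e2, e3, mul_one]
    -- hence D s ≥ exp(a s) * (β c₁ s^{p-2} / w s^{β p})
    have hDlb : Real.exp (a * s) * (β * c₁ * s ^ (p - 2) / w s ^ (β * p)) ≤ D s := by
      have hexp : 0 < Real.exp (a * s) := Real.exp_pos _
      have h3 : Real.exp (a * s) * (R * ((-(β * p)) * u s ^ (-(β * p) - 1)))
          ≤ Real.exp (a * s) * (u' s * ((-(β * p)) * u s ^ (-(β * p) - 1))) :=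
        mul_le_mul_of_nonneg_left hmul hexp.le
      rw [he] at h3
      have hD : D s = a * Real.exp (a * s) * u s ^ (-(β * p))
          + Real.exp (a * s) * (u' s * ((-(β * p)) * u s ^ (-(β * p) - 1))) := by
        rw [hD_def]; ring
      rw [hD]
      nlinarith [Real.rpow_pos_of_pos hUpos (-(β * p))]
    refine le_trans ?_ hDlb
    rw [hm_def]
    have hsp : s₀ ^ (p - 2) ≤ s ^ (p - 2) := Real.rpow_le_rpow hs₀pos.le hs.1 hp2
    have hwp : w s ^ (β * p) ≤ w t₀ ^ (β * p) :=
      Real.rpow_le_rpow hWpos.le (hwmono (Set.mem_Ici.mpr hs0) (Set.mem_Ici.mpr ht₀) hs.2) hβp.le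
    have hexple : Real.exp (a * s₀) ≤ Real.exp (a * s) := by
      apply Real.exp_le_exp.mpr
      exact mul_le_mul_of_nonneg_left hs.1 hapos.le
    have hsp0 : 0 < s₀ ^ (p - 2) := Real.rpow_pos_of_pos hs₀pos _
    have hnum : β * c₁ * s₀ ^ (p - 2) / w t₀ ^ (β * p)
        ≤ β * c₁ * s ^ (p - 2) / w s ^ (β * p) := by
      apply div_le_div₀ (by positivity) (mul_le_mul_of_nonneg_left hsp (by positivity)) hWb hwp
    calc Real.exp (a * s₀) * (β * c₁ * s₀ ^ (p - 2) / w t₀ ^ (β * p))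
        ≤ Real.exp (a * s) * (β * c₁ * s₀ ^ (p - 2) / w t₀ ^ (β * p)) := by
          apply mul_le_mul_of_nonneg_right hexple (by positivity)
      _ ≤ Real.exp (a * s) * (β * c₁ * s ^ (p - 2) / w s ^ (β * p)) := by
          apply mul_le_mul_of_nonneg_left hnum (Real.exp_pos _).le
  -- monotonicity of g s - m s on [s₀, t₀]
  have hφmono : MonotoneOn (fun s => g s - m * s) (Set.Icc s₀ t₀) := by
    apply monotoneOn_of_deriv_nonneg (convex_Icc s₀ t₀)
    · intro s hs
      have hs0 : 0 ≤ s := le_trans hs₀pos.le hs.1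
      exact ((hg s hs0).sub ((hasDerivAt_id' s).const_mul m)).continuousAt.continuousWithinAt
    · rw [interior_Icc]
      intro s hs
      have hs0 : 0 ≤ s := le_trans hs₀pos.le hs.1.le
      exact ((hg s hs0).sub ((hasDerivAt_id' s).const_mul m)).differentiableAt.differentiableWithinAt
    · rw [interior_Icc]
      intro s hs
      have hs0 : 0 ≤ s := le_trans hs₀pos.le hs.1.le
      have hd := (hg s hs0).sub ((hasDerivAt_id' s).const_mul m)
      rw [show deriv (fun s => g s - m * s) s = D s - m * 1 from hd.deriv]
      have := hkey s ⟨hs.1.le, hs.2.le⟩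
      simp only [mul_one]
      linarith
  have hmem₁ : s₀ ∈ Set.Icc s₀ t₀ := ⟨le_refl _, hs₀lt.le⟩
  have hmem₂ : t₀ ∈ Set.Icc s₀ t₀ := ⟨hs₀lt.le, le_refl _⟩
  have hφ := hφmono hmem₁ hmem₂ hs₀lt.le
  simp only at hφ
  have hgs₀pos : 0 < g s₀ := by
    rw [hg_def]
    exact mul_pos (Real.exp_pos _) (Real.rpow_pos_of_pos (hu s₀ hs₀pos.le) _)
  have hmain : m * (ε * t₀) ≤ Real.exp (a * t₀) * u t₀ ^ (-(β * p)) := by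
    have h1 : m * (t₀ - s₀) ≤ g t₀ := by
      have : g t₀ = g s₀ + (g t₀ - m * t₀ - (g s₀ - m * s₀)) + m * (t₀ - s₀) := by ring
      nlinarith
    have h2 : t₀ - s₀ = ε * t₀ := by rw [hs₀_def]; ring
    rw [← h2]
    exact h1
  -- translate into the power inequality
  have hUpos : 0 < u t₀ := hu t₀ ht₀
  have hUb : 0 < u t₀ ^ (β * p) := Real.rpow_pos_of_pos hUpos _
  have hsplit : Real.exp (a * t₀) = Real.exp (a * s₀) * Real.exp (c₂ * β * δ * t₀) := by
    rw [← Real.exp_add]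
    congr 1
    rw [hs₀_def, ha_def, hε_def]
    field_simp
    ring
  have hs₀pow : s₀ ^ (p - 2) = (1 - ε) ^ (p - 2) * t₀ ^ (p - 2) := by
    rw [hs₀_def, Real.mul_rpow (by linarith) ht₀pos.le]
  have hTT : t₀ ^ (p - 2) * t₀ = t₀ ^ (p - 1) := by
    nth_rw 2 [← Real.rpow_one t₀]
    rw [← Real.rpow_add ht₀pos]
    congr 1
    ring
  have hUneg : u t₀ ^ (-(β * p)) = (u t₀ ^ (β * p))⁻¹ := Real.rpow_neg hUpos.le _
  have hc : (1 / 2 : ℝ) ≤ (1 - ε) ^ (p - 2) := nash_aux_half hp hεpos.le hε1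
  set C : ℝ := (1 - ε) ^ (p - 2) with hC_def
  set S : ℝ := t₀ ^ (p - 2) with hS_def
  set E1 : ℝ := Real.exp (a * s₀) with hE1_def
  set E2 : ℝ := Real.exp (c₂ * β * δ * t₀) with hE2_def
  set Ub : ℝ := u t₀ ^ (β * p) with hUb_def
  set Wb : ℝ := w t₀ ^ (β * p) with hWb_def
  have hSpos : 0 < S := Real.rpow_pos_of_pos ht₀pos _
  have hE1pos : 0 < E1 := Real.exp_pos _
  have hE2pos : 0 < E2 := Real.exp_pos _
  have hCpos : 0 < C := by linarith
  -- the core power inequality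
  have hstar : t₀ ^ (p - 1) * Ub ≤ (2 / (β * c₁) * p ^ 2 / δ) * E2 * Wb := by
    rw [hm_def, hs₀pow, hsplit, hUneg] at hmain
    -- hmain : E1 * (β * c₁ * (C * S) / Wb) * (ε * t₀) ≤ E1 * E2 * Ub⁻¹
    have h1 : β * c₁ * C * S * (ε * t₀) * Ub ≤ E2 * Wb := by
      have h := mul_le_mul_of_nonneg_right hmain (le_of_lt (mul_pos hwbt₀ hUb))
      have lhs_eq : E1 * (β * c₁ * (C * S) / Wb) * (ε * t₀) * (Wb * Ub)
          = E1 * (β * c₁ * C * S * (ε * t₀) * Ub) := by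
        field_simp
      have rhs_eq : E1 * E2 * Ub⁻¹ * (Wb * Ub) = E1 * (E2 * Wb) := by
        field_simp
      rw [lhs_eq, rhs_eq] at h
      exact le_of_mul_le_mul_left h hE1pos
    rw [← hTT]
    rw [hε_def] at h1
    have key : β * c₁ * δ * (S * t₀ * Ub) ≤ 2 * p ^ 2 * (E2 * Wb) := by
      have h2 : β * c₁ * (1/2) * (δ / p ^ 2) * (S * t₀ * Ub) ≤ E2 * Wb := by
        refine le_trans ?_ h1
        have hfac : 0 ≤ β * c₁ * (δ / p ^ 2) * (S * t₀ * Ub) := by positivity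
        nlinarith [mul_le_mul_of_nonneg_right hc
          (by positivity : (0:ℝ) ≤ β * c₁ * (δ / p ^ 2) * (S * t₀ * Ub))]
      have := mul_le_mul_of_nonneg_left h2 (by positivity : (0:ℝ) ≤ 2 * p ^ 2)
      calc β * c₁ * δ * (S * t₀ * Ub)
          = 2 * p ^ 2 * (β * c₁ * (1/2) * (δ / p ^ 2) * (S * t₀ * Ub)) := by
            field_simp
        _ ≤ 2 * p ^ 2 * (E2 * Wb) := this
    have heq : 2 / (β * c₁) * p ^ 2 / δ * E2 * Wb = 2 * p ^ 2 * (E2 * Wb) / (β * c₁ * δ) := by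
      field_simp
    rw [heq, le_div_iff₀ (by positivity : (0:ℝ) < β * c₁ * δ)]
    nlinarith [key]
  -- take (β p)-th roots
  have hLHSnn : 0 ≤ t₀ ^ (p - 1) * Ub := by positivity
  have hroot := Real.rpow_le_rpow hLHSnn hstar (by positivity : (0:ℝ) ≤ 1 / (β * p))
  have hL : (t₀ ^ (p - 1) * Ub) ^ (1 / (β * p)) = t₀ ^ ((p - 1) / (β * p)) * u t₀ := by
    rw [Real.mul_rpow (by positivity) hUb.le, hUb_def]
    rw [← Real.rpow_mul ht₀pos.le, ← Real.rpow_mul hUpos.le]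
    rw [mul_one_div, mul_one_div, div_self hβp.ne', Real.rpow_one]
  have hR : ((2 / (β * c₁) * p ^ 2 / δ) * E2 * Wb) ^ (1 / (β * p))
      = (2 / (β * c₁) * p ^ 2 / δ) ^ (1 / (β * p)) * Real.exp (c₂ * δ * t₀ / p) * w t₀ := by
    rw [Real.mul_rpow (by positivity) hwbt₀.le,
        Real.mul_rpow (by positivity) hE2pos.le]
    congr 1
    · congr 1
      rw [hE2_def, ← Real.exp_mul]
      congr 1
      field_simp
    · rw [hWb_def, ← Real.rpow_mul hwt₀.le, mul_one_div, div_self hβp.ne', Real.rpow_one]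
  rw [hL, hR] at hroot
  exact hroot
end

section
/- Let G : [1/2, 1] → (−∞, 0) be continuously differentiable with G < 0, and suppose G'(t) ≥ −C₁ + C₂ G(t)² for all t ∈ [1/2, 1], where C₁ > 0 and C₂ ∈ (0,1]. Then G(1) ≥ min{ −C₁ − 2√(C₁/C₂), −8/(3C₂) }. -/
/-- Riccati-type comparison: if `G < 0` on `[1/2,1]` and
`G' ≥ -C₁ + C₂ G²`, with `C₁ > 0`, `C₂ ∈ (0,1]`, then
`G(1) ≥ min (-C₁ - 2√(C₁/C₂)) (-8/(3C₂))`. -/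
theorem riccati_lower_bound (G G' : ℝ → ℝ) (C₁ C₂ : ℝ)
    (hC₁ : 0 < C₁) (hC₂ : C₂ ∈ Set.Ioc (0 : ℝ) 1)
    (hneg : ∀ t ∈ Set.Icc (1/2 : ℝ) 1, G t < 0)
    (hderiv : ∀ t ∈ Set.Icc (1/2 : ℝ) 1, HasDerivAt G (G' t) t)
    (hcont : ContinuousOn G' (Set.Icc (1/2 : ℝ) 1))
    (hineq : ∀ t ∈ Set.Icc (1/2 : ℝ) 1, G' t ≥ -C₁ + C₂ * G t ^ 2) :
    G 1 ≥ min (-C₁ - 2 * Real.sqrt (C₁ / C₂)) (-8 / (3 * C₂)) := by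
  obtain ⟨hC₂0, hC₂1⟩ := hC₂
  by_contra h
  push_neg at h
  rw [lt_min_iff] at h
  obtain ⟨h1, h2⟩ := h
  set a := Real.sqrt (C₁ / C₂) with ha
  have ha0 : 0 ≤ a := Real.sqrt_nonneg _
  have ha2 : a ^ 2 = C₁ / C₂ := Real.sq_sqrt (by positivity)
  have haC : C₂ * a ^ 2 = C₁ := by
    rw [ha2]; field_simp
  have hG1 : G 1 < -2 * a := by nlinarith
  have hGc : ContinuousOn G (Set.Icc (1/2:ℝ) 1) := fun t ht =>
    (hderiv t ht).continuousAt.continuousWithinAt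
  have hmem1 : (1:ℝ) ∈ Set.Icc (1/2:ℝ) 1 := by norm_num
  -- derivative is large when G t ≤ -2a
  have hkey : ∀ t ∈ Set.Icc (1/2:ℝ) 1, G t ≤ -2 * a → G' t ≥ 3 * C₁ := by
    intro t ht hle
    have h3 := hineq t ht
    have hsq : G t ^ 2 ≥ 4 * a ^ 2 := by nlinarith
    nlinarith [mul_le_mul_of_nonneg_left hsq (le_of_lt hC₂0)]
  -- Step 1: G ≤ -2a on all of [1/2,1]
  have step1 : ∀ t ∈ Set.Icc (1/2:ℝ) 1, G t ≤ -2 * a := by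
    by_contra hs
    push_neg at hs
    obtain ⟨s, hsmem, hsgt⟩ := hs
    set K : Set ℝ := Set.Icc s 1 ∩ G ⁻¹' Set.Ici (-2 * a) with hK
    have hsub : Set.Icc s 1 ⊆ Set.Icc (1/2:ℝ) 1 :=
      Set.Icc_subset_Icc hsmem.1 le_rfl
    have hKc : IsClosed K :=
      ContinuousOn.preimage_isClosed_of_isClosed (hGc.mono hsub)
        isClosed_Icc isClosed_Ici
    have hKne : K.Nonempty := ⟨s, ⟨le_rfl, hsmem.2⟩, le_of_lt hsgt⟩
    have hKbdd : BddAbove K := ⟨1, fun x hx => hx.1.2⟩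
    set t₀ := sSup K with ht₀
    have hKcomp : IsCompact K :=
      isCompact_Icc.of_isClosed_subset hKc Set.inter_subset_left
    have ht₀K : t₀ ∈ K := hKcomp.sSup_mem hKne
    have ht₀mem : t₀ ∈ Set.Icc (1/2:ℝ) 1 := hsub ht₀K.1
    have ht₀lt : t₀ < 1 := by
      rcases lt_or_eq_of_le ht₀K.1.2 with h' | h'
      · exact h'
      · exfalso; have := ht₀K.2; rw [h'] at this
        exact absurd this (not_le.mpr hG1)
    -- G strictly monotone on [t₀,1]
    have hmono : StrictMonoOn G (Set.Icc t₀ 1) := by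
      apply strictMonoOn_of_deriv_pos (convex_Icc _ _)
      · exact hGc.mono (Set.Icc_subset_Icc ht₀mem.1 le_rfl)
      · intro x hx
        rw [interior_Icc] at hx
        have hxmem : x ∈ Set.Icc (1/2:ℝ) 1 :=
          ⟨le_trans ht₀mem.1 (le_of_lt hx.1), le_of_lt hx.2⟩
        have hxK : x ∉ K := fun hxK => absurd (le_csSup hKbdd hxK) (not_le.mpr hx.1)
        have hxlt : G x < -2 * a := by
          by_contra hc
          exact hxK ⟨⟨le_trans ht₀K.1.1 (le_of_lt hx.1), le_of_lt hx.2⟩, not_lt.mp hc⟩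
        rw [(hderiv x hxmem).deriv]
        have := hkey x hxmem (le_of_lt hxlt)
        linarith
    have := hmono (Set.left_mem_Icc.mpr (le_of_lt ht₀lt))
      (Set.right_mem_Icc.mpr (le_of_lt ht₀lt)) ht₀lt
    have := ht₀K.2
    simp only [Set.mem_preimage, Set.mem_Ici] at this
    linarith
  -- Step 2: u = -1/G has derivative ≥ (3/4) C₂
  have hne : ∀ t ∈ Set.Icc (1/2:ℝ) 1, G t ≠ 0 := fun t ht => (hneg t ht).ne
  set w : ℝ → ℝ := fun t => -(G t)⁻¹ - 3/4 * C₂ * t with hw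
  have hwderiv : ∀ t ∈ Set.Icc (1/2:ℝ) 1,
      HasDerivAt w (G' t / G t ^ 2 - 3/4 * C₂) t := by
    intro t ht
    have h1' : HasDerivAt (fun t => -(G t)⁻¹) (G' t / G t ^ 2) t := by
      have := ((hderiv t ht).inv (hne t ht)).neg
      have h'' : HasDerivAt (fun t => -(G t)⁻¹) (-(-G' t / G t ^ 2)) t := this
      convert h'' using 1; ring
    have h2' : HasDerivAt (fun t : ℝ => 3/4 * C₂ * t) (3/4 * C₂) t := by
      simpa using (hasDerivAt_id t).const_mul (3/4 * C₂)
    exact h1'.sub h2'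
  have hwmono : MonotoneOn w (Set.Icc (1/2:ℝ) 1) := by
    apply monotoneOn_of_deriv_nonneg (convex_Icc _ _)
    · exact ContinuousOn.sub ((hGc.inv₀ hne).neg)
        ((continuous_const.mul continuous_id).continuousOn)
    · intro x hx
      rw [interior_Icc] at hx
      exact ((hwderiv x ⟨le_of_lt hx.1, le_of_lt hx.2⟩).differentiableAt).differentiableWithinAt
    · intro x hx
      rw [interior_Icc] at hx
      have hxmem : x ∈ Set.Icc (1/2:ℝ) 1 := ⟨le_of_lt hx.1, le_of_lt hx.2⟩
      rw [(hwderiv x hxmem).deriv]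
      have hle := step1 x hxmem
      have hGx := hneg x hxmem
      have hGx2 : 0 < G x ^ 2 := by nlinarith [mul_pos (neg_pos.mpr hGx) (neg_pos.mpr hGx)]
      have hbig : G' x ≥ 3/4 * C₂ * G x ^ 2 := by
        have h3 := hineq x hxmem
        have hsq : G x ^ 2 ≥ 4 * a ^ 2 := by
          nlinarith [mul_nonneg (by linarith : (0:ℝ) ≤ -(G x + 2*a))
            (by linarith : (0:ℝ) ≤ -(G x - 2*a))]
        have := mul_le_mul_of_nonneg_left hsq hC₂0.le
        nlinarith
      have : G' x / G x ^ 2 ≥ 3/4 * C₂ := by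
        rw [ge_iff_le, le_div_iff₀ hGx2]
        nlinarith
      linarith
  have hhalf : (1/2:ℝ) ∈ Set.Icc (1/2:ℝ) 1 := by norm_num
  have hww := hwmono hhalf hmem1 (by norm_num)
  have hGhalf : G (1/2) < 0 := hneg _ hhalf
  have hinvhalf : -(G (1/2))⁻¹ > 0 := neg_pos.mpr (inv_lt_zero.mpr hGhalf)
  have hG1neg : G 1 < 0 := hneg _ hmem1
  have hfin : -(G 1)⁻¹ ≥ 3/8 * C₂ := by
    simp only [hw] at hww
    linarith
  have hinv : (G 1)⁻¹ * G 1 = 1 := inv_mul_cancel₀ hG1neg.ne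
  have h2' : G 1 * (3 * C₂) < -8 :=
    (lt_div_iff₀ (by positivity : (0:ℝ) < 3 * C₂)).mp h2
  nlinarith [mul_le_mul_of_nonneg_right hfin (le_of_lt (neg_pos.mpr hG1neg))]
end
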